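/- Let h*_0, ..., h*_d be integers and define, for 2 ≤ j ≤ ⌊d/2⌋, a_1 = h*_1 + h*_0 − h*_d, a_j = (h*_0 + ... + h*_j) − (h*_d + ... + h*_{d-j+1}), c_1 = h*_1 + h*_0, and c_j = (h*_0 + ... + h*_j) − (h*_d + ... + h*_{d-j+2}). If a_1 ≤ a_j and c_1 ≤ c_j for all 2 ≤ j ≤ ⌊d/2⌋, then for all 1 ≤ j ≤ ⌊d/2⌋ − 1: (i) h*_{d-1} + h*_{d-2} + ... + h*_{d-j} ≤ h*_2 + h*_3 + ... + h*_{j+1}, and (ii) h*_d + h*_{d-1} + ... + h*_{d-j+1} ≤ h*_2 + h*_3 + ... + h*_{j+1}. -/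

import Mathlib

open Finset

/-- Corollary 2 deduction: partial-sum inequalities among `h*`-coefficients from
the inequalities `a₁ ≤ a_j` and `c₁ ≤ c_j`. -/
theorem stmt2 (d : ℕ) (h : ℕ → ℤ)
    (ha : ∀ j, 2 ≤ j → j ≤ d / 2 →
      h 1 + h 0 - h d ≤
        (∑ i ∈ Finset.range (j + 1), h i) - ∑ i ∈ Finset.range j, h (d - i))
    (hc : ∀ j, 2 ≤ j → j ≤ d / 2 →
      h 1 + h 0 ≤
        (∑ i ∈ Finset.range (j + 1), h i) - ∑ i ∈ Finset.range (j - 1), h (d - i)) :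
    ∀ j, 1 ≤ j → j ≤ d / 2 - 1 →
      (∑ i ∈ Finset.range j, h (d - 1 - i) ≤ ∑ i ∈ Finset.range j, h (2 + i)) ∧
      (∑ i ∈ Finset.range j, h (d - i) ≤ ∑ i ∈ Finset.range j, h (2 + i)) := by
  intro j hj1 hj2
  have hd2 : 2 ≤ d / 2 := by omega
  have h2 : 2 ≤ j + 1 := by omega
  have h3 : j + 1 ≤ d / 2 := by omega
  have ha' := ha (j + 1) h2 h3
  have hc' := hc (j + 1) h2 h3
  have e1 : ∑ i ∈ Finset.range (j + 1 + 1), h i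
      = (∑ i ∈ Finset.range j, h (2 + i)) + h 1 + h 0 := by
    rw [Finset.sum_range_succ', Finset.sum_range_succ']
    congr 1
    congr 1
    exact Finset.sum_congr rfl (fun i _ => by congr 1; omega)
  have e2 : ∑ i ∈ Finset.range (j + 1), h (d - i)
      = (∑ i ∈ Finset.range j, h (d - 1 - i)) + h d := by
    rw [Finset.sum_range_succ']
    congr 1
    exact Finset.sum_congr rfl (fun i _ => by congr 1; omega)
  have e3 : ∑ i ∈ Finset.range (j + 1 - 1), h (d - i)
      = ∑ i ∈ Finset.range j, h (d - i) := by norm_num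
  rw [e1, e2] at ha'
  rw [e1, e3] at hc'
  constructor <;> linarith
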